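/- For every positive class S, there exists a unique positive equilibrium in S; that is, the set S ∩ E₊ consists of exactly one point x̄_S. -/

import Mathlib

open Matrix Finset

section PF
variable {m : ℕ}

private lemma matPow_nonneg_le {M N : Matrix (Fin m) (Fin m) ℝ}
    (h0 : ∀ i j, 0 ≤ M i j) (h : ∀ i j, M i j ≤ N i j) (k : ℕ) :
    ∀ i j, 0 ≤ (M ^ k) i j ∧ (M ^ k) i j ≤ (N ^ k) i j := by
  induction k with
  | zero => intro i j; simp [Matrix.one_apply]; split <;> simp
  | succ k ih =>
    intro i j
    rw [pow_succ, pow_succ, Matrix.mul_apply, Matrix.mul_apply]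
    constructor
    · exact Finset.sum_nonneg fun l _ => mul_nonneg (ih i l).1 (h0 l j)
    · refine Finset.sum_le_sum fun l _ => ?_
      have h1 := ih i l
      exact mul_le_mul h1.2 (h l j) (h0 l j) (le_trans h1.1 h1.2)

private lemma colsum_pow {M : Matrix (Fin m) (Fin m) ℝ} {s : ℝ}
    (h : ∀ j, ∑ i, M i j = s) (k : ℕ) : ∀ j, ∑ i, (M ^ k) i j = s ^ k := by
  induction k with
  | zero => intro j; simp [Matrix.one_apply]
  | succ k ih =>
    intro j
    rw [pow_succ, pow_succ]
    calc ∑ i, (M ^ k * M) i j = ∑ l, (∑ i, (M ^ k) i l) * M l j := by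
          simp_rw [Matrix.mul_apply, Finset.sum_mul]
          rw [Finset.sum_comm]
      _ = s ^ k * ∑ l, M l j := by simp_rw [ih]; rw [Finset.mul_sum]
      _ = s ^ k * s := by rw [h j]

private lemma pow_mulVec_eq {M : Matrix (Fin m) (Fin m) ℝ} {v : Fin m → ℝ} {s : ℝ}
    (h : M.mulVec v = s • v) (k : ℕ) : (M ^ k).mulVec v = s ^ k • v := by
  induction k with
  | zero => simp
  | succ k ih =>
    rw [pow_succ', pow_succ']
    rw [← Matrix.mulVec_mulVec, ih, Matrix.mulVec_smul, h, smul_smul, mul_comm]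

theorem pf_kernel (hm : 0 < m) (A : Matrix (Fin m) (Fin m) ℝ)
    (hAnn : ∀ i j, 0 ≤ A i j) (hAirr : ∀ i j, 0 < ((1 + A) ^ (m - 1)) i j) :
    ∃ κ : Fin m → ℝ, (∀ j, 0 < κ j) ∧
      ∀ ψ : Fin m → ℝ, (∀ j, 0 < ψ j) →
        ((A - Matrix.diagonal (fun j => ∑ i, A i j)).mulVec ψ = 0 ↔
          ∃ t : ℝ, 0 < t ∧ ψ = t • κ) := by
  set c : Fin m → ℝ := fun j => ∑ i, A i j with hc
  set L : Matrix (Fin m) (Fin m) ℝ := A - Matrix.diagonal c with hL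
  have hcnn : ∀ j, 0 ≤ c j := fun j => Finset.sum_nonneg fun i _ => hAnn i j
  have hLcol : ∀ j, ∑ i, L i j = 0 := by
    intro j
    simp only [hL, Matrix.sub_apply]
    rw [Finset.sum_sub_distrib]
    have : ∑ i, Matrix.diagonal c i j = c j := by
      rw [Finset.sum_eq_single j] <;> simp [Matrix.diagonal_apply]
      intro b hb; exact fun h => absurd h hb
    rw [this]; ring
  -- ε
  set ε : ℝ := (1 + ∑ j, c j)⁻¹ with hε
  have hsum : (0:ℝ) ≤ ∑ j, c j := Finset.sum_nonneg fun j _ => hcnn j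
  have hεpos : 0 < ε := by positivity
  have hεc : ∀ j, ε * c j < 1 := by
    intro j
    have h1 : c j < 1 + ∑ j, c j := by
      have : c j ≤ ∑ j', c j' := Finset.single_le_sum (fun j' _ => hcnn j') (Finset.mem_univ j)
      linarith
    rw [hε]
    rw [inv_mul_lt_iff₀ (by positivity), mul_one]
    exact h1
  -- the positive matrix Q
  set R : Matrix (Fin m) (Fin m) ℝ := 1 + (1 + ε • L) with hR
  have hRapp : ∀ i j, R i j = (if i = j then 2 - ε * c j else 0) + ε * A i j := by
    intro i j
    simp only [hR, hL, Matrix.add_apply, Matrix.smul_apply, Matrix.sub_apply,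
      Matrix.one_apply, Matrix.diagonal_apply, smul_eq_mul]
    split
    · next h => subst h; ring
    · ring
  set γ : ℝ := min ε 1 with hγ
  have hγpos : 0 < γ := lt_min hεpos one_pos
  have hRge : ∀ i j, (γ • (1 + A)) i j ≤ R i j := by
    intro i j
    rw [hRapp]
    simp only [Matrix.smul_apply, Matrix.add_apply, Matrix.one_apply, smul_eq_mul]
    have h2 : ε * c j < 1 := hεc j
    have hγε : γ ≤ ε := min_le_left _ _
    have hγ1 : γ ≤ 1 := min_le_right _ _
    have hA := hAnn i j
    split
    · nlinarith
    · nlinarith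
  have hγA0 : ∀ i j, 0 ≤ (γ • (1 + A)) i j := by
    intro i j
    simp only [Matrix.smul_apply, Matrix.add_apply, Matrix.one_apply, smul_eq_mul]
    split
    · nlinarith [hAnn i j]
    · nlinarith [hAnn i j]
  set Q : Matrix (Fin m) (Fin m) ℝ := R ^ (m - 1) with hQ
  have hQpos : ∀ i j, 0 < Q i j := by
    intro i j
    have h1 := (matPow_nonneg_le hγA0 hRge (m - 1) i j).2
    have h2 : (γ • (1 + A)) ^ (m - 1) = γ ^ (m - 1) • (1 + A) ^ (m - 1) := smul_pow γ _ _
    have h3 : 0 < ((γ • (1 + A)) ^ (m - 1)) i j := by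
      rw [h2]; simp only [Matrix.smul_apply, smul_eq_mul]
      exact mul_pos (pow_pos hγpos _) (hAirr i j)
    exact lt_of_lt_of_le h3 h1
  set σ : ℝ := 2 ^ (m - 1) with hσ
  have hσpos : 0 < σ := by positivity
  have hQcol : ∀ j, ∑ i, Q i j = σ := by
    have hRcol : ∀ j, ∑ i, R i j = 2 := by
      intro j
      simp_rw [hRapp]
      rw [Finset.sum_add_distrib]
      rw [Finset.sum_ite_eq' Finset.univ j (fun _ => 2 - ε * c j)]
      simp only [Finset.mem_univ, if_true]
      rw [← Finset.mul_sum]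
      have hAc : ∑ i, A i j = c j := rfl
      rw [hAc]; ring
    exact colsum_pow hRcol (m - 1)
  have hQfix : ∀ v : Fin m → ℝ, L.mulVec v = 0 → Q.mulVec v = σ • v := by
    intro v hv
    have hRv : R.mulVec v = (2:ℝ) • v := by
      simp only [hR]
      rw [Matrix.add_mulVec, Matrix.add_mulVec, Matrix.smul_mulVec, hv, Matrix.one_mulVec]
      ext i; simp [two_smul]; ring
    exact pow_mulVec_eq hRv (m - 1)
  -- existence of a nonzero kernel vector
  have hdet : L.det = 0 := by
    have h1 : Lᵀ.mulVec (fun _ => (1:ℝ)) = 0 := by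
      ext i
      simp only [Matrix.mulVec, dotProduct, Matrix.transpose_apply, mul_one]
      exact hLcol i
    have h2 : Lᵀ.det = 0 := by
      rw [← Matrix.exists_mulVec_eq_zero_iff]
      refine ⟨fun _ => 1, ?_, h1⟩
      intro h
      have := congrFun h ⟨0, hm⟩
      simp at this
    rwa [Matrix.det_transpose] at h2
  obtain ⟨v, hv0, hvker⟩ := (Matrix.exists_mulVec_eq_zero_iff).2 hdet
  -- v has a sign
  have hQv : Q.mulVec v = σ • v := hQfix v hvker
  have hsign : (∀ i, 0 ≤ v i) ∨ (∀ i, v i ≤ 0) := by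
    by_contra hcon
    push_neg at hcon
    obtain ⟨⟨ip, hip⟩, ⟨iq, hiq⟩⟩ := hcon
    have key : ∀ i, σ * |v i| < ∑ j, Q i j * |v j| := by
      intro i
      have habs : σ * v i = ∑ j, Q i j * v j := by
        have := congrFun hQv i
        simp only [Matrix.mulVec, dotProduct, Pi.smul_apply, smul_eq_mul] at this
        linarith [this]
      have hlt1 : ∑ j, Q i j * v j < ∑ j, Q i j * |v j| := by
        apply Finset.sum_lt_sum
        · intro j _; exact mul_le_mul_of_nonneg_left (le_abs_self _) (hQpos i j).le
        · refine ⟨ip, Finset.mem_univ _, ?_⟩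
          have : v ip < |v ip| := by rw [abs_of_neg hip]; linarith
          exact mul_lt_mul_of_pos_left this (hQpos i ip)
      have hlt2 : -∑ j, Q i j * v j < ∑ j, Q i j * |v j| := by
        rw [← Finset.sum_neg_distrib]
        apply Finset.sum_lt_sum
        · intro j _
          rw [← mul_neg]
          exact mul_le_mul_of_nonneg_left (neg_le_abs _) (hQpos i j).le
        · refine ⟨iq, Finset.mem_univ _, ?_⟩
          rw [← mul_neg]
          have : -v iq < |v iq| := by rw [abs_of_pos hiq]; linarith
          exact mul_lt_mul_of_pos_left this (hQpos i iq)
      calc σ * |v i| = |σ * v i| := by rw [abs_mul, abs_of_pos hσpos]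
        _ = |∑ j, Q i j * v j| := by rw [habs]
        _ < ∑ j, Q i j * |v j| := abs_lt.2 ⟨by linarith, hlt1⟩
    have hlt : ∑ i, σ * |v i| < ∑ i, ∑ j, Q i j * |v j| := by
      apply Finset.sum_lt_sum_of_nonempty
      · exact Finset.univ_nonempty_iff.2 ⟨⟨0, hm⟩⟩
      · intro i _; exact key i
    have heq : ∑ i, ∑ j, Q i j * |v j| = ∑ i, σ * |v i| := by
      rw [Finset.sum_comm]
      congr 1; ext j
      rw [← Finset.sum_mul, hQcol j]
    rw [heq] at hlt
    exact lt_irrefl _ hlt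
  -- replace v by nonneg version
  obtain ⟨w, hw0, hwker, hwnn⟩ : ∃ w : Fin m → ℝ, w ≠ 0 ∧ L.mulVec w = 0 ∧ ∀ i, 0 ≤ w i := by
    rcases hsign with h | h
    · exact ⟨v, hv0, hvker, h⟩
    · refine ⟨-v, by simpa using hv0, by rw [Matrix.mulVec_neg, hvker, neg_zero], fun i => by
        simpa using h i⟩
  have hQw : Q.mulVec w = σ • w := hQfix w hwker
  obtain ⟨j₀, hj₀⟩ : ∃ j₀, 0 < w j₀ := by
    by_contra hcon
    push_neg at hcon
    exact hw0 (funext fun i => le_antisymm (hcon i) (hwnn i))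
  have hκpos : ∀ i, 0 < w i := by
    intro i
    have h1 : σ * w i = ∑ j, Q i j * w j := by
      have := congrFun hQw i
      simp only [Matrix.mulVec, dotProduct, Pi.smul_apply, smul_eq_mul] at this
      linarith [this]
    have h2 : Q i j₀ * w j₀ ≤ ∑ j, Q i j * w j := by
      apply Finset.single_le_sum (fun j _ => mul_nonneg (hQpos i j).le (hwnn j)) (Finset.mem_univ j₀)
    have h3 : 0 < Q i j₀ * w j₀ := mul_pos (hQpos i j₀) hj₀
    nlinarith
  refine ⟨w, hκpos, ?_⟩
  intro ψ hψ
  constructor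
  · intro hψker
    have hQψ : Q.mulVec ψ = σ • ψ := hQfix ψ hψker
    obtain ⟨j₁, _, hj₁⟩ := Finset.exists_min_image Finset.univ (fun j => ψ j / w j)
      (Finset.univ_nonempty_iff.2 ⟨⟨0, hm⟩⟩)
    set t : ℝ := ψ j₁ / w j₁ with ht
    have htpos : 0 < t := div_pos (hψ j₁) (hκpos j₁)
    set u : Fin m → ℝ := ψ - t • w with hu
    have hunn : ∀ j, 0 ≤ u j := by
      intro j
      have := hj₁ j (Finset.mem_univ j)
      have h2 : t * w j ≤ ψ j := by
        have h := hj₁ j (Finset.mem_univ j)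
        rw [le_div_iff₀ (hκpos j)] at h
        linarith
      simp only [hu, Pi.sub_apply, Pi.smul_apply, smul_eq_mul]
      linarith
    have huj₁ : u j₁ = 0 := by
      simp only [hu, Pi.sub_apply, Pi.smul_apply, smul_eq_mul, ht]
      rw [div_mul_cancel₀ _ (hκpos j₁).ne']
      ring
    have huker : L.mulVec u = 0 := by
      simp only [hu]
      rw [Matrix.mulVec_sub, hψker, Matrix.mulVec_smul, hwker]
      simp
    have hQu : Q.mulVec u = σ • u := hQfix u huker
    have hzero : ∀ j, u j = 0 := by
      have h1 : σ * u j₁ = ∑ j, Q j₁ j * u j := by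
        have := congrFun hQu j₁
        simp only [Matrix.mulVec, dotProduct, Pi.smul_apply, smul_eq_mul] at this
        linarith [this]
      rw [huj₁, mul_zero] at h1
      have h2 := (Finset.sum_eq_zero_iff_of_nonneg
        (fun j _ => mul_nonneg (hQpos j₁ j).le (hunn j))).1 h1.symm
      intro j
      have := h2 j (Finset.mem_univ j)
      have hq := hQpos j₁ j
      by_contra hne
      have : 0 < Q j₁ j * u j := mul_pos hq (lt_of_le_of_ne (hunn j) (Ne.symm hne))
      linarith [h2 j (Finset.mem_univ j)]
    refine ⟨t, htpos, ?_⟩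
    funext j
    have := hzero j
    simp only [hu, Pi.sub_apply, Pi.smul_apply, smul_eq_mul] at this
    simp only [Pi.smul_apply, smul_eq_mul]
    linarith
  · rintro ⟨t, _, rfl⟩
    rw [Matrix.mulVec_smul, hwker]
    simp

end PF

open Matrix

section RankLem
variable {n m : ℕ}

lemma mulVec_inj_of_rank (B : Matrix (Fin n) (Fin m) ℝ) (hB : B.rank = m) :
    ∀ v : Fin m → ℝ, B.mulVec v = 0 → v = 0 := by
  intro v hv
  have h2 := LinearMap.finrank_range_add_finrank_ker B.mulVecLin
  rw [Matrix.rank] at hB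
  rw [hB] at h2
  have hdom : Module.finrank ℝ (Fin m → ℝ) = m := by simp
  rw [hdom] at h2
  have hker : Module.finrank ℝ (LinearMap.ker B.mulVecLin) = 0 := by omega
  have hkerbot : LinearMap.ker B.mulVecLin = ⊥ :=
    Submodule.finrank_eq_zero.mp hker
  have : v ∈ LinearMap.ker B.mulVecLin := by
    simpa [Matrix.mulVecLin] using hv
  rwa [hkerbot, Submodule.mem_bot] at this

lemma transpose_mulVec_surj_of_rank (B : Matrix (Fin n) (Fin m) ℝ) (hB : B.rank = m) :
    ∀ w : Fin m → ℝ, ∃ y : Fin n → ℝ, Bᵀ.mulVec y = w := by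
  have hrk : Bᵀ.rank = m := by rw [Matrix.rank_transpose]; exact hB
  have hrange : LinearMap.range Bᵀ.mulVecLin = ⊤ := by
    apply Submodule.eq_top_of_finrank_eq
    rw [← Matrix.rank, hrk]
    simp
  intro w
  have : w ∈ LinearMap.range Bᵀ.mulVecLin := hrange ▸ Submodule.mem_top
  obtain ⟨y, hy⟩ := this
  exact ⟨y, hy⟩

end RankLem

open MeasureTheory Set intervalIntegral Matrix Finset

section Analysis
variable {θ : ℝ → ℝ}

lemma theta_pos (hθ0 : θ 0 = 0) (hθmono : StrictMonoOn θ (Set.Ici (0:ℝ)))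
    {u : ℝ} (hu : 0 < u) : 0 < θ u := by
  have := hθmono (Set.mem_Ici.mpr le_rfl) (Set.mem_Ici.mpr hu.le) hu
  rwa [hθ0] at this

lemma log_theta_mono (hθ0 : θ 0 = 0) (hθmono : StrictMonoOn θ (Set.Ici (0:ℝ))) :
    StrictMonoOn (fun u => Real.log (θ u)) (Set.Ioi (0:ℝ)) := by
  intro a ha b hb hab
  exact Real.log_lt_log (theta_pos hθ0 hθmono ha)
    (hθmono (Set.mem_Ici.mpr (le_of_lt ha)) (Set.mem_Ici.mpr (le_of_lt hb)) hab)

lemma log_theta_large (hθ0 : θ 0 = 0) (hθmono : StrictMonoOn θ (Set.Ici (0:ℝ)))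
    (hθonto : ∀ r : ℝ, 0 ≤ r → ∃ y : ℝ, 0 ≤ y ∧ θ y = r) (M : ℝ) :
    ∃ u₀ : ℝ, 1 ≤ u₀ ∧ ∀ u, u₀ ≤ u → M ≤ Real.log (θ u) := by
  obtain ⟨y, hy0, hy⟩ := hθonto (Real.exp M) (Real.exp_pos M).le
  refine ⟨max (y + 1) 1, le_max_right _ _, fun u hu => ?_⟩
  have hyu : y < u := lt_of_lt_of_le (by linarith [le_max_left (y+1) (1:ℝ)]) hu
  have h1 : θ y < θ u := hθmono (Set.mem_Ici.mpr hy0) (Set.mem_Ici.mpr (hy0.trans hyu.le)) hyu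
  rw [hy] at h1
  calc M = Real.log (Real.exp M) := (Real.log_exp M).symm
    _ ≤ Real.log (θ u) := Real.log_le_log (Real.exp_pos M) h1.le

lemma log_theta_tendsto_zero (hθ0 : θ 0 = 0) (hcont : Continuous θ)
    (hθmono : StrictMonoOn θ (Set.Ici (0:ℝ))) (M : ℝ) :
    ∃ δ : ℝ, 0 < δ ∧ ∀ u, 0 < u → u ≤ δ → Real.log (θ u) ≤ M := by
  have h1 : Filter.Tendsto θ (nhds 0) (nhds 0) := by
    simpa [hθ0] using hcont.tendsto 0
  have h2 : ∀ᶠ u in nhds (0:ℝ), θ u < Real.exp M :=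
    h1.eventually (Filter.Tendsto.eventually_lt_const (Real.exp_pos M) Filter.tendsto_id)
  obtain ⟨δ, hδ, hδ2⟩ := Metric.eventually_nhds_iff.mp h2
  refine ⟨δ/2, by linarith, fun u hu hu2 => ?_⟩
  have : θ u < Real.exp M := hδ2 (by rw [Real.dist_eq]; rw [abs_of_pos (by linarith : (0:ℝ) < u - 0)]; simp; linarith)
  calc Real.log (θ u) ≤ Real.log (Real.exp M) :=
        Real.log_le_log (theta_pos hθ0 hθmono hu) this.le
    _ = M := Real.log_exp M

lemma Lt_integrableOn (hcont : Continuous θ) (hθ0 : θ 0 = 0)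
    (hθmono : StrictMonoOn θ (Set.Ici (0:ℝ)))
    (hθint : MeasureTheory.IntegrableOn (fun y => |Real.log (θ y)|) (Set.Ioc (0:ℝ) 1)) :
    ∀ s : ℝ, IntegrableOn (fun u => Real.log (θ u)) (Set.Ioc 0 s) := by
  have hmeas : Measurable (fun u => Real.log (θ u)) :=
    Real.measurable_log.comp hcont.measurable
  have hint1 : IntegrableOn (fun u => Real.log (θ u)) (Set.Ioc 0 1) := by
    refine ⟨hmeas.aestronglyMeasurable.restrict, ?_⟩
    have := hθint.2
    rw [MeasureTheory.hasFiniteIntegral_iff_norm] at this ⊢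
    simpa [abs_abs] using this
  intro s
  rcases le_or_gt s 1 with hs | hs
  · exact hint1.mono_set (Set.Ioc_subset_Ioc_right hs)
  · have hcont2 : ContinuousOn (fun u => Real.log (θ u)) (Set.Icc 1 s) := by
      intro u hu
      have hu0 : 0 < θ u := theta_pos hθ0 hθmono (by linarith [hu.1])
      exact ((Real.continuousAt_log hu0.ne').comp hcont.continuousAt).continuousWithinAt
    have h2 : IntegrableOn (fun u => Real.log (θ u)) (Set.Ioc 1 s) :=
      (hcont2.integrableOn_compact isCompact_Icc).mono_set Set.Ioc_subset_Icc_self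
    have heq : Set.Ioc (0:ℝ) s = Set.Ioc 0 1 ∪ Set.Ioc 1 s :=
      (Set.Ioc_union_Ioc_eq_Ioc (by linarith) hs.le).symm
    rw [heq]
    exact hint1.union h2

end Analysis

noncomputable def Hfun (θ : ℝ → ℝ) (s : ℝ) : ℝ := ∫ u in (0:ℝ)..s, Real.log (θ u)

section Analysis2
variable {θ : ℝ → ℝ}
  (hall : ∀ s : ℝ, IntegrableOn (fun u => Real.log (θ u)) (Set.Ioc 0 s))

include hall

lemma Lt_intervalIntegrable {a b : ℝ} (ha : 0 ≤ a) (hb : 0 ≤ b) :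
    IntervalIntegrable (fun u => Real.log (θ u)) volume a b := by
  rw [intervalIntegrable_iff]
  apply (hall (max a b)).mono_set
  intro u hu
  rcases hu with ⟨h1, h2⟩
  exact ⟨lt_of_le_of_lt (le_min ha hb) (by simpa using h1), by simpa using h2⟩

lemma Hfun_continuousOn : ContinuousOn (Hfun θ) (Set.Ici 0) := by
  intro x hx
  have hx0 : (0:ℝ) ≤ x := hx
  have h1 : ContinuousOn (fun y => ∫ t in Set.Ioc (0:ℝ) y, Real.log (θ t)) (Set.Icc 0 (x+1)) :=
    continuousOn_primitive ((integrableOn_Icc_iff_integrableOn_Ioc).2 (hall (x+1)))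
  have h2 : ContinuousWithinAt (fun y => ∫ t in Set.Ioc (0:ℝ) y, Real.log (θ t)) (Set.Ici 0) x := by
    apply (h1 x ⟨hx0, by linarith⟩).mono_of_mem_nhdsWithin
    have : Set.Ici (0:ℝ) ∩ Set.Iio (x+1) ∈ nhdsWithin x (Set.Ici 0) :=
      Filter.inter_mem self_mem_nhdsWithin
        (nhdsWithin_le_nhds (Iio_mem_nhds (by linarith)))
    apply Filter.mem_of_superset this
    intro y hy
    exact ⟨hy.1, hy.2.le⟩
  apply h2.congr
  · intro y hy
    exact intervalIntegral.integral_of_le hy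
  · exact intervalIntegral.integral_of_le hx0

lemma Hfun_hasDerivAt (hcont : Continuous θ) (hθ0 : θ 0 = 0)
    (hθmono : StrictMonoOn θ (Set.Ici (0:ℝ))) {s : ℝ} (hs : 0 < s) :
    HasDerivAt (Hfun θ) (Real.log (θ s)) s := by
  apply intervalIntegral.integral_hasDerivAt_right
    (Lt_intervalIntegrable hall le_rfl hs.le)
  · exact ⟨Set.univ, Filter.univ_mem,
      ((Real.measurable_log.comp hcont.measurable).aestronglyMeasurable).restrict⟩
  · have : 0 < θ s := theta_pos hθ0 hθmono hs
    exact (Real.continuousAt_log this.ne').comp hcont.continuousAt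

lemma Hfun_le (hθ0 : θ 0 = 0) (hθmono : StrictMonoOn θ (Set.Ici (0:ℝ)))
    {s : ℝ} (hs : 0 < s) : Hfun θ s ≤ s * Real.log (θ s) := by
  rw [Hfun, intervalIntegral.integral_of_le hs.le]
  have h1 : ∫ u in Set.Ioc (0:ℝ) s, Real.log (θ u) ≤ ∫ _ in Set.Ioc (0:ℝ) s, Real.log (θ s) := by
    apply setIntegral_mono_on (hall s) (integrableOn_const (by simp) (by simp))
      measurableSet_Ioc
    intro u hu
    rcases eq_or_lt_of_le hu.2 with h | h
    · rw [h]
    · exact ((log_theta_mono hθ0 hθmono) hu.1 (lt_trans hu.1 h) h).le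
  have h2 : ∫ _ in Set.Ioc (0:ℝ) s, Real.log (θ s) = s * Real.log (θ s) := by
    rw [setIntegral_const]
    simp [Real.volume_Ioc, ENNReal.toReal_ofReal hs.le, hs.le]
  linarith [h1, h2 ▸ h1]

lemma Hfun_coercive (hθ0 : θ 0 = 0)
    (hθmono : StrictMonoOn θ (Set.Ici (0:ℝ)))
    (hθonto : ∀ r : ℝ, 0 ≤ r → ∃ y : ℝ, 0 ≤ y ∧ θ y = r) (y : ℝ) :
    ∃ C : ℝ, ∀ s, 0 ≤ s → y * s + s - C ≤ Hfun θ s := by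
  obtain ⟨u₀, hu₀1, hu₀⟩ := log_theta_large hθ0 hθmono hθonto (y + 1)
  have hu₀0 : (0:ℝ) < u₀ := by linarith
  -- bound on [0, u₀]
  have hcompact : IsCompact (Set.Icc (0:ℝ) u₀) := isCompact_Icc
  obtain ⟨z, hz, hzmin⟩ := hcompact.exists_isMinOn (Set.nonempty_Icc.2 (by linarith))
    ((Hfun_continuousOn hall).mono (by intro u hu; exact hu.1))
  set m₀ : ℝ := Hfun θ z with hm₀
  refine ⟨|m₀| + (|y|+1) * u₀ + |Hfun θ u₀| + (|y|+1) * u₀, fun s hs => ?_⟩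
  rcases le_or_gt s u₀ with hcase | hcase
  · have h1 : m₀ ≤ Hfun θ s := hzmin ⟨hs, hcase⟩
    have h2 : y * s ≤ |y| * u₀ := by
      calc y * s ≤ |y| * s := mul_le_mul_of_nonneg_right (le_abs_self y) hs
        _ ≤ |y| * u₀ := mul_le_mul_of_nonneg_left hcase (abs_nonneg y)
    have h3 : -|m₀| ≤ m₀ := neg_abs_le m₀
    have h4 : 0 ≤ |Hfun θ u₀| := abs_nonneg _
    nlinarith [abs_nonneg y, abs_nonneg m₀]
  · have hint1 := Lt_intervalIntegrable hall (le_of_lt hu₀0) hs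
    have hsub : Hfun θ s - Hfun θ u₀ = ∫ u in u₀..s, Real.log (θ u) := by
      rw [Hfun, Hfun]
      rw [← intervalIntegral.integral_interval_sub_left
        (Lt_intervalIntegrable hall le_rfl (by linarith))
        (Lt_intervalIntegrable hall le_rfl hu₀0.le)]
    have hmono : ∫ u in u₀..s, (y + 1) ≤ ∫ u in u₀..s, Real.log (θ u) := by
      apply intervalIntegral.integral_mono_on (le_of_lt hcase)
        (intervalIntegrable_const) hint1
      intro u hu
      exact hu₀ u hu.1
    rw [intervalIntegral.integral_const, smul_eq_mul] at hmono
    have h5 : Hfun θ s ≥ Hfun θ u₀ + (s - u₀) * (y + 1) := by linarith [hsub ▸ hmono]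
    have h6 : -|Hfun θ u₀| ≤ Hfun θ u₀ := neg_abs_le _
    have h7 : (y+1) * u₀ ≤ (|y|+1) * u₀ := by
      apply mul_le_mul_of_nonneg_right _ hu₀0.le
      linarith [le_abs_self y]
    nlinarith [abs_nonneg m₀, abs_nonneg y, hu₀0.le]

lemma Hfun_local_bound (hcont : Continuous θ) (hθ0 : θ 0 = 0)
    (hθmono : StrictMonoOn θ (Set.Ici (0:ℝ))) {a : ℝ} (ha : 0 < a) (d : ℝ) :
    ∃ M δ : ℝ, 0 < δ ∧ ∀ t, 0 ≤ t → t ≤ δ → Hfun θ (a + t * d) - Hfun θ a ≤ M * t := by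
  set δ : ℝ := min 1 (a / (2 * (|d| + 1))) with hδdef
  have hδpos : 0 < δ := lt_min one_pos (by positivity)
  have hrange : ∀ t, 0 ≤ t → t ≤ δ → a / 2 ≤ a + t * d ∧ a + t * d ≤ a + |d| := by
    intro t ht htδ
    have h1 : |t * d| ≤ a / 2 := by
      rw [abs_mul, abs_of_nonneg ht]
      have h2 : t ≤ a / (2 * (|d| + 1)) := le_trans htδ (min_le_right _ _)
      calc t * |d| ≤ (a / (2 * (|d| + 1))) * |d| :=
            mul_le_mul_of_nonneg_right h2 (abs_nonneg d)
        _ ≤ a / 2 := by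
            rw [div_mul_eq_mul_div, div_le_div_iff₀ (by positivity) (by norm_num)]
            nlinarith [abs_nonneg d]
    have h3 : |t * d| ≤ |d| := by
      rw [abs_mul, abs_of_nonneg ht]
      have ht1 : t ≤ 1 := le_trans htδ (min_le_left _ _)
      nlinarith [abs_nonneg d]
    constructor
    · have := neg_abs_le (t * d); linarith
    · have := le_abs_self (t * d); linarith
  -- bound |log θ| on [a/2, a + |d|]
  have hLcont : ContinuousOn (fun u => |Real.log (θ u)|) (Set.Icc (a/2) (a + |d|)) := by
    intro u hu
    have hu0 : 0 < θ u := theta_pos hθ0 hθmono (by linarith [hu.1, abs_nonneg d])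
    exact (((Real.continuousAt_log hu0.ne').comp hcont.continuousAt).abs).continuousWithinAt
  obtain ⟨z, hz, hzmax⟩ := isCompact_Icc.exists_isMaxOn
    (Set.nonempty_Icc.2 (by linarith [abs_nonneg d])) hLcont
  set M₀ : ℝ := |Real.log (θ z)| with hM₀
  refine ⟨M₀ * (|d| + 1), δ, hδpos, fun t ht htδ => ?_⟩
  obtain ⟨hlo, hhi⟩ := hrange t ht htδ
  have hx0 : 0 < a + t * d := by linarith
  have hsub : Hfun θ (a + t * d) - Hfun θ a = ∫ u in a..(a + t * d), Real.log (θ u) := by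
    rw [Hfun, Hfun, ← intervalIntegral.integral_interval_sub_left
      (Lt_intervalIntegrable hall le_rfl hx0.le)
      (Lt_intervalIntegrable hall le_rfl ha.le)]
  have hbound : ∀ u ∈ Set.uIoc a (a + t * d), ‖Real.log (θ u)‖ ≤ M₀ := by
    intro u hu
    have h1 : a/2 ≤ u ∧ u ≤ a + |d| := by
      rcases hu with ⟨h2, h3⟩
      have hmin : a/2 ≤ min a (a + t * d) := le_min (by linarith) hlo
      have hmax : max a (a + t * d) ≤ a + |d| := max_le (by linarith [abs_nonneg d]) hhi
      exact ⟨le_of_lt (lt_of_le_of_lt hmin h2), le_trans h3 hmax⟩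
    exact hzmax ⟨h1.1, h1.2⟩
  have h2 := intervalIntegral.norm_integral_le_of_norm_le_const hbound
  rw [← hsub] at h2
  have h3 : |a + t * d - a| = |t * d| := by congr 1; ring
  have h4 : |t * d| ≤ t * (|d| + 1) := by
    rw [abs_mul, abs_of_nonneg ht]
    nlinarith [abs_nonneg d]
  have h5 : Hfun θ (a + t * d) - Hfun θ a ≤ |Hfun θ (a + t * d) - Hfun θ a| := le_abs_self _
  have hM₀nn : 0 ≤ M₀ := abs_nonneg _
  calc Hfun θ (a + t * d) - Hfun θ a ≤ M₀ * |a + t * d - a| := by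
        rw [Real.norm_eq_abs] at h2; exact le_trans h5 h2
    _ = M₀ * |t * d| := by rw [h3]
    _ ≤ M₀ * (t * (|d| + 1)) := mul_le_mul_of_nonneg_left h4 hM₀nn
    _ = M₀ * (|d| + 1) * t := by ring
end Analysis2
set_option maxHeartbeats 2000000 in
theorem stmt_1
    (n m : ℕ) (hm : 0 < m) (hmn : m ≤ n)
    (θ : ℝ → ℝ)
    (hθlip : LocallyLipschitz θ)
    (hθ0 : θ 0 = 0)
    (hθnn : ∀ y : ℝ, 0 ≤ θ y)
    (hθmono : StrictMonoOn θ (Set.Ici (0:ℝ)))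
    (hθonto : ∀ r : ℝ, 0 ≤ r → ∃ y : ℝ, 0 ≤ y ∧ θ y = r)
    (hθint : MeasureTheory.IntegrableOn (fun y => |Real.log (θ y)|) (Set.Ioc (0:ℝ) 1))
    (A : Matrix (Fin m) (Fin m) ℝ)
    (hAnn : ∀ i j, 0 ≤ A i j)
    (hAirr : ∀ i j, 0 < ((1 + A) ^ (m - 1)) i j)
    (B : Matrix (Fin n) (Fin m) ℝ)
    (hBnn : ∀ k j, 0 ≤ B k j)
    (hBrank : B.rank = m)
    (hBrow : ∀ k, ∃ j, B k j ≠ 0)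
    (hBent : ∀ k j, B k j = 0 ∨ 1 ≤ B k j)
    (f : EuclideanSpace ℝ (Fin n) → EuclideanSpace ℝ (Fin n))
    (hf : ∀ x : EuclideanSpace ℝ (Fin n), ∀ k : Fin n,
      f x k = ∑ i : Fin m, ∑ j : Fin m,
        A i j * (∏ l : Fin n, θ (x l) ^ (B l j)) * (B k i - B k j))
    (p : EuclideanSpace ℝ (Fin n)) (hp : ∀ k, 0 ≤ p k)
    (D : Submodule ℝ (EuclideanSpace ℝ (Fin n)))
    (hD : D = Submodule.span ℝ
      {v : EuclideanSpace ℝ (Fin n) | ∃ i j : Fin m, v = fun k => B k i - B k j})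
    (S : Set (EuclideanSpace ℝ (Fin n)))
    (hS : S = {x : EuclideanSpace ℝ (Fin n) | (∀ k, 0 ≤ x k) ∧ x - p ∈ D})
    (hSpos : ∃ q ∈ S, ∀ k, 0 < q k)
    :
    ∃! xbar : EuclideanSpace ℝ (Fin n),
      xbar ∈ S ∧ (∀ k, 0 < xbar k) ∧ f xbar = 0 := by
  classical
  have hn : 0 < n := lt_of_lt_of_le hm hmn
  obtain ⟨q, hqS, hqpos⟩ := hSpos
  have hθcont : Continuous θ := hθlip.continuous
  have hall : ∀ s : ℝ, MeasureTheory.IntegrableOn (fun u => Real.log (θ u)) (Set.Ioc 0 s) :=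
    Lt_integrableOn hθcont hθ0 hθmono hθint
  obtain ⟨κ, hκpos, hκ⟩ := pf_kernel hm A hAnn hAirr
  obtain ⟨ystar, hystar⟩ := transpose_mulVec_surj_of_rank B hBrank (fun j => Real.log (κ j))
  have hBinj := mulVec_inj_of_rank B hBrank
  set LM : Matrix (Fin m) (Fin m) ℝ := A - Matrix.diagonal (fun j => ∑ i, A i j) with hLM
  set ψ : EuclideanSpace ℝ (Fin n) → Fin m → ℝ := fun x j => ∏ l, θ (x l) ^ (B l j) with hψ
  -- Bᵀ ystar equals log κ componentwise
  have hy : ∀ j', ∑ k, B k j' * ystar k = Real.log (κ j') := by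
    intro j'
    have h := congrFun hystar j'
    simpa [Matrix.mulVec, dotProduct, Matrix.transpose_apply] using h
  -- rewrite f via matrices
  have hfeq : ∀ x : EuclideanSpace ℝ (Fin n), ∀ k,
      f x k = B.mulVec (LM.mulVec (ψ x)) k := by
    intro x k
    have hLapp : ∀ i j, LM i j = A i j - if i = j then (∑ i', A i' i) else 0 := by
      intro i j
      simp [hLM, Matrix.sub_apply, Matrix.diagonal_apply]
    have hexp : ∀ i, (LM.mulVec (ψ x)) i
        = (∑ j, A i j * ψ x j) - (∑ i', A i' i) * ψ x i := by
      intro i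
      simp only [Matrix.mulVec, dotProduct]
      simp_rw [hLapp, sub_mul, ite_mul, zero_mul]
      rw [Finset.sum_sub_distrib]
      congr 1
      rw [Finset.sum_ite_eq Finset.univ i (fun j => (∑ i', A i' i) * ψ x j)]
      simp
    rw [hf]
    simp only [Matrix.mulVec, dotProduct]
    have hψx : ∀ j, (∏ l, θ (x l) ^ (B l j)) = ψ x j := fun j => rfl
    simp_rw [hψx]
    calc ∑ i, ∑ j, A i j * ψ x j * (B k i - B k j)
        = (∑ i, ∑ j, A i j * ψ x j * B k i) - (∑ j, (∑ i, A i j) * ψ x j * B k j) := by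
          simp_rw [mul_sub, Finset.sum_sub_distrib]
          congr 1
          rw [Finset.sum_comm]
          exact Finset.sum_congr rfl fun j _ => by rw [← Finset.sum_mul, ← Finset.sum_mul]
      _ = ∑ i, B k i * ((∑ j, A i j * ψ x j) - (∑ i', A i' i) * ψ x i) := by
          simp_rw [mul_sub, Finset.sum_sub_distrib]
          congr 1
          · exact Finset.sum_congr rfl fun i _ => by
              rw [Finset.mul_sum]
              exact Finset.sum_congr rfl fun j _ => by ring
          · exact Finset.sum_congr rfl fun j _ => by ring
      _ = ∑ i, B k i * (LM.mulVec (ψ x)) i := by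
          exact Finset.sum_congr rfl fun i _ => by rw [hexp i]
      _ = ∑ i, B k i * ∑ j, LM i j * ψ x j := by
          simp only [Matrix.mulVec, dotProduct]
  have hf0 : ∀ x : EuclideanSpace ℝ (Fin n), (f x = 0 ↔ LM.mulVec (ψ x) = 0) := by
    intro x
    constructor
    · intro h
      apply hBinj
      funext k
      have h1 : f x k = (0 : EuclideanSpace ℝ (Fin n)) k := by rw [h]
      rw [hfeq x k] at h1
      simpa using h1
    · intro h
      ext k
      rw [hfeq x k, h]
      simp [Matrix.mulVec_zero]
  -- orthogonality characterization
  have horth : ∀ v : EuclideanSpace ℝ (Fin n),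
      v ∈ Dᗮ ↔ ∀ i j : Fin m, (∑ k, (B k i - B k j) * v k) = 0 := by
    intro v
    rw [hD]
    constructor
    · intro h i j
      have hgen : (WithLp.toLp 2 (fun k => B k i - B k j) : EuclideanSpace ℝ (Fin n)) ∈
          Submodule.span ℝ {v : EuclideanSpace ℝ (Fin n) | ∃ i j : Fin m, v = fun k => B k i - B k j} :=
        Submodule.subset_span ⟨i, j, rfl⟩
      have h2 := (Submodule.mem_orthogonal _ v).1 h _ hgen
      rw [PiLp.inner_apply] at h2
      simpa [RCLike.inner_apply, mul_comm] using h2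
    · intro h
      rw [Submodule.mem_orthogonal]
      intro u hu
      induction hu using Submodule.span_induction with
      | mem u hu =>
          obtain ⟨i, j, hu⟩ := hu
          rw [PiLp.inner_apply]
          simpa [RCLike.inner_apply, hu, mul_comm] using h i j
      | zero => simp
      | add u w _ _ hu hw => rw [inner_add_left, hu, hw]; simp
      | smul c u _ hu => rw [inner_smul_left, hu]; simp
  -- equilibrium characterization
  have hEchar : ∀ x : EuclideanSpace ℝ (Fin n), (∀ k, 0 < x k) →
      (f x = 0 ↔ ∀ i j : Fin m,
        ∑ k, (B k i - B k j) * (Real.log (θ (x k)) - ystar k) = 0) := by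
    intro x hx
    have hψpos : ∀ j, 0 < ψ x j := fun j =>
      Finset.prod_pos fun l _ => Real.rpow_pos_of_pos (theta_pos hθ0 hθmono (hx l)) _
    have hψexp : ∀ j, ψ x j = Real.exp (∑ l, B l j * Real.log (θ (x l))) := by
      intro j
      rw [Real.exp_sum]
      apply Finset.prod_congr rfl
      intro l _
      rw [Real.rpow_def_of_pos (theta_pos hθ0 hθmono (hx l)), mul_comm]
    have hexpand : ∀ i j : Fin m,
        ∑ k, (B k i - B k j) * (Real.log (θ (x k)) - ystar k)
        = ((∑ k, B k i * Real.log (θ (x k))) - (∑ k, B k i * ystar k))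
          - ((∑ k, B k j * Real.log (θ (x k))) - (∑ k, B k j * ystar k)) := by
      intro i j
      rw [← Finset.sum_sub_distrib, ← Finset.sum_sub_distrib, ← Finset.sum_sub_distrib]
      exact Finset.sum_congr rfl fun k _ => by ring
    rw [hf0 x]
    constructor
    · intro hker i j
      obtain ⟨t, ht, hψt⟩ := (hκ (ψ x) hψpos).1 hker
      have hlog : ∀ j', ∑ k, B k j' * Real.log (θ (x k)) = Real.log t + Real.log (κ j') := by
        intro j'
        have h1 : ψ x j' = t * κ j' := by rw [hψt]; simp
        rw [hψexp j'] at h1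
        have h2 := congrArg Real.log h1
        rwa [Real.log_exp, Real.log_mul ht.ne' (hκpos j').ne'] at h2
      rw [hexpand i j, hlog i, hlog j, hy i, hy j]
      ring
    · intro hP
      set j₀ : Fin m := ⟨0, hm⟩ with hj₀
      set s : ℝ := (∑ k, B k j₀ * Real.log (θ (x k))) - Real.log (κ j₀) with hs
      have hconst : ∀ j', ∑ k, B k j' * Real.log (θ (x k)) = s + Real.log (κ j') := by
        intro j'
        have h := hP j' j₀
        rw [hexpand j' j₀, hy j', hy j₀] at h
        rw [hs]
        linarith
      apply (hκ (ψ x) hψpos).2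
      refine ⟨Real.exp s, Real.exp_pos s, ?_⟩
      funext j'
      rw [hψexp j', hconst j', Real.exp_add, Real.exp_log (hκpos j')]
      simp
  -- the objective function
  set g : EuclideanSpace ℝ (Fin n) → ℝ :=
    fun x => ∑ l, (Hfun θ (x l) - ystar l * x l) with hg
  set O : Set (EuclideanSpace ℝ (Fin n)) := {x | ∀ k, 0 ≤ x k} with hO
  have hSsubO : S ⊆ O := by rw [hS]; intro x hx; exact hx.1
  have hOclosed : IsClosed O := by
    have hOeq : O = ⋂ k, {x : EuclideanSpace ℝ (Fin n) | 0 ≤ x k} := by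
      ext x; simp [hO, Set.mem_iInter]
    rw [hOeq]
    exact isClosed_iInter fun k =>
      isClosed_le continuous_const (EuclideanSpace.proj k).continuous
  have hSclosed : IsClosed S := by
    rw [hS]
    have h1 : IsClosed {x : EuclideanSpace ℝ (Fin n) | x - p ∈ D} := by
      have : {x : EuclideanSpace ℝ (Fin n) | x - p ∈ D}
          = (fun x : EuclideanSpace ℝ (Fin n) => x - p) ⁻¹' (D : Set (EuclideanSpace ℝ (Fin n))) := rfl
      rw [this]
      exact (Submodule.closed_of_finiteDimensional D).preimage
        (continuous_id.sub continuous_const)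
    exact hOclosed.inter h1
  have hgcont : ContinuousOn g O := by
    apply continuousOn_finset_sum
    intro l _
    apply ContinuousOn.sub
    · exact (Hfun_continuousOn hall).comp
        (EuclideanSpace.proj l).continuous.continuousOn (fun x hx => hx l)
    · exact (continuous_const.mul (EuclideanSpace.proj l).continuous).continuousOn
  choose Cl hCl using fun l => Hfun_coercive hall hθ0 hθmono hθonto (ystar l)
  have hglb : ∀ x ∈ O, (∑ l, x l) - (∑ l, Cl l) ≤ g x := by
    intro x hx
    rw [hg, ← Finset.sum_sub_distrib]
    apply Finset.sum_le_sum
    intro l _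
    have := hCl l (x l) (hx l)
    linarith
  set K : Set (EuclideanSpace ℝ (Fin n)) := S ∩ {x | g x ≤ g q} with hK
  have hqK : q ∈ K := ⟨hqS, show g q ≤ g q from le_rfl⟩
  have hKclosed : IsClosed K := by
    apply (hgcont.mono hSsubO).preimage_isClosed_of_isClosed hSclosed isClosed_Iic
  have hKcompact : IsCompact K := by
    apply Metric.isCompact_of_isClosed_isBounded hKclosed
    set R : ℝ := g q + ∑ l, Cl l with hR
    apply (Metric.isBounded_closedBall (x := (0 : EuclideanSpace ℝ (Fin n))) (r := R)).subset
    intro x hx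
    have hxO : x ∈ O := hSsubO hx.1
    have h1 : (∑ l, x l) ≤ R := by
      have := hglb x hxO
      have h2 : g x ≤ g q := hx.2
      rw [hR]; linarith
    have hnorm : ‖x‖ ≤ R := by
      rw [EuclideanSpace.norm_eq]
      have hs1 : ∑ k, ‖x k‖^2 ≤ R^2 := by
        have h3 := Finset.sum_sq_le_sq_sum_of_nonneg
          (s := Finset.univ) (f := fun k => x k) (fun i _ => hxO i)
        have h4 : 0 ≤ ∑ k, x k := Finset.sum_nonneg fun i _ => hxO i
        simp only [Real.norm_eq_abs, sq_abs]
        nlinarith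
      calc Real.sqrt (∑ k, ‖x k‖^2) ≤ Real.sqrt (R^2) := Real.sqrt_le_sqrt hs1
        _ = |R| := by rw [Real.sqrt_sq_eq_abs]
        _ = R := abs_of_nonneg (le_trans (Finset.sum_nonneg fun i _ => hxO i) h1)
    simpa [Metric.mem_closedBall, dist_zero_right] using hnorm
  obtain ⟨xb, hxbK, hxbmin'⟩ := hKcompact.exists_isMinOn ⟨q, hqK⟩
    ((hgcont.mono hSsubO).mono (by intro x hx; exact hx.1))
  have hxbS : xb ∈ S := hxbK.1
  have hxbO : ∀ k, 0 ≤ xb k := hSsubO hxbS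
  have hmin : ∀ x ∈ S, g xb ≤ g x := by
    intro x hx
    rcases le_or_gt (g x) (g q) with h | h
    · exact hxbmin' ⟨hx, h⟩
    · exact le_trans (hxbmin' hqK) h.le
  -- membership of segment points in S
  have hDmemq : q - p ∈ D := by rw [hS] at hqS; exact hqS.2
  have hDmemxb : xb - p ∈ D := by rw [hS] at hxbS; exact hxbS.2
  -- positivity of the minimizer
  have hxbpos : ∀ k, 0 < xb k := by
    by_contra hcon
    push_neg at hcon
    obtain ⟨k₀, hk₀⟩ := hcon
    have hk₀0 : xb k₀ = 0 := le_antisymm hk₀ (hxbO k₀)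
    set d : EuclideanSpace ℝ (Fin n) := q - xb with hd
    have hdk : ∀ l, d l = q l - xb l := fun l => rfl
    -- bounds on the non-zero coordinates
    have hMδ : ∀ l, ∃ Mδ : ℝ, ∃ δ : ℝ, 0 < δ ∧ (xb l ≠ 0 →
        ∀ t, 0 ≤ t → t ≤ δ → Hfun θ (xb l + t * d l) - Hfun θ (xb l) ≤ Mδ * t) := by
      intro l
      by_cases hl : xb l = 0
      · exact ⟨0, 1, one_pos, fun h => absurd hl h⟩
      · have hpos : 0 < xb l := lt_of_le_of_ne (hxbO l) (Ne.symm hl)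
        obtain ⟨M, δ, hδ, hb⟩ := Hfun_local_bound hall hθcont hθ0 hθmono hpos (d l)
        exact ⟨M, δ, hδ, fun _ => hb⟩
    choose Ml δl hδlpos hMl using hMδ
    set CC : ℝ := (∑ l ∈ Finset.univ.filter (fun l => ¬ xb l = 0), Ml l)
      + |∑ l, ystar l * d l| with hCC
    -- small-log bounds on the zero coordinates
    have hZδ : ∀ l, ∃ δ : ℝ, 0 < δ ∧ (xb l = 0 →
        ∀ t, 0 < t → t ≤ δ → Real.log (θ (t * q l)) ≤ 0) := by
      intro l
      by_cases hl : xb l = 0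
      · obtain ⟨δ', hδ', hδb⟩ := log_theta_tendsto_zero hθ0 hθcont hθmono 0
        refine ⟨δ' / q l, div_pos hδ' (hqpos l), fun _ t ht htδ => ?_⟩
        exact hδb _ (mul_pos ht (hqpos l)) ((le_div_iff₀ (hqpos l)).1 htδ)
      · exact ⟨1, one_pos, fun h => absurd h hl⟩
    choose δZ hδZpos hδZ using hZδ
    -- the strong bound at k₀
    obtain ⟨δ0', hδ0', hδ0b⟩ := log_theta_tendsto_zero hθ0 hθcont hθmono (-(CC + 1) / q k₀)
    set δ0 : ℝ := δ0' / q k₀ with hδ0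
    have hδ0pos : 0 < δ0 := div_pos hδ0' (hqpos k₀)
    have hk₀b : ∀ t, 0 < t → t ≤ δ0 → q k₀ * Real.log (θ (t * q k₀)) ≤ -(CC + 1) := by
      intro t ht htδ
      have h1 : Real.log (θ (t * q k₀)) ≤ -(CC + 1) / q k₀ := by
        apply hδ0b _ (mul_pos ht (hqpos k₀))
        rw [hδ0] at htδ
        exact (le_div_iff₀ (hqpos k₀)).1 htδ
      rw [le_div_iff₀ (hqpos k₀)] at h1
      calc q k₀ * Real.log (θ (t * q k₀)) = Real.log (θ (t * q k₀)) * q k₀ := mul_comm _ _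
        _ ≤ -(CC + 1) := h1
    -- the common small t
    set t : ℝ := min 1 (min δ0 (Finset.univ.inf' (Finset.univ_nonempty_iff.2 ⟨⟨0, hn⟩⟩)
      (fun l => min (δZ l) (δl l)))) with ht
    have htpos : 0 < t := by
      apply lt_min one_pos
      apply lt_min hδ0pos
      rw [Finset.lt_inf'_iff]
      intro l _
      exact lt_min (hδZpos l) (hδlpos l)
    have ht1 : t ≤ 1 := min_le_left _ _
    have htδ0 : t ≤ δ0 := le_trans (min_le_right _ _) (min_le_left _ _)
    have htδZ : ∀ l, t ≤ δZ l := fun l =>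
      le_trans (le_trans (min_le_right _ _) (min_le_right _ _))
        (le_trans (Finset.inf'_le _ (Finset.mem_univ l)) (min_le_left _ _))
    have htδl : ∀ l, t ≤ δl l := fun l =>
      le_trans (le_trans (min_le_right _ _) (min_le_right _ _))
        (le_trans (Finset.inf'_le _ (Finset.mem_univ l)) (min_le_right _ _))
    -- the point xb + t d is in S
    have hptS : xb + t • d ∈ S := by
      rw [hS]
      constructor
      · intro l
        have hlq : (xb + t • d) l = xb l + t * d l := by
          rw [PiLp.add_apply, PiLp.smul_apply, smul_eq_mul]
        rw [hlq, hdk l]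
        have := hqpos l
        have := hxbO l
        nlinarith
      · have : (xb + t • d) - p = (xb - p) + t • d := by abel
        rw [this]
        exact Submodule.add_mem D hDmemxb
          (Submodule.smul_mem D t (by
            rw [hd]
            have heq2 : q - xb = (q - p) - (xb - p) := by abel
            rw [heq2]
            exact Submodule.sub_mem D hDmemq hDmemxb))
    have hΔ0 : (0:ℝ) ≤ g (xb + t • d) - g xb := sub_nonneg.2 (hmin _ hptS)
    -- expand the difference
    have hΔeq : g (xb + t • d) - g xb
        = (∑ l, (Hfun θ (xb l + t * d l) - Hfun θ (xb l))) - t * ∑ l, ystar l * d l := by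
      rw [hg]
      simp only [PiLp.add_apply, PiLp.smul_apply, smul_eq_mul]
      rw [← Finset.sum_sub_distrib, Finset.mul_sum, ← Finset.sum_sub_distrib]
      exact Finset.sum_congr rfl fun l _ => by ring
    -- split into zero and nonzero coordinates
    have hsplit : (∑ l, (Hfun θ (xb l + t * d l) - Hfun θ (xb l)))
        = (∑ l ∈ Finset.univ.filter (fun l => xb l = 0), (Hfun θ (xb l + t * d l) - Hfun θ (xb l)))
        + (∑ l ∈ Finset.univ.filter (fun l => ¬ xb l = 0), (Hfun θ (xb l + t * d l) - Hfun θ (xb l))) :=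
      (Finset.sum_filter_add_sum_filter_not Finset.univ _ _).symm
    -- bound on zero part
    have hZsum : (∑ l ∈ Finset.univ.filter (fun l => xb l = 0),
        (Hfun θ (xb l + t * d l) - Hfun θ (xb l))) ≤ -(CC + 1) * t := by
      have hterm : ∀ l ∈ Finset.univ.filter (fun l => xb l = 0),
          Hfun θ (xb l + t * d l) - Hfun θ (xb l)
            ≤ (if l = k₀ then -(CC + 1) * t else 0) := by
        intro l hl
        have hl0 : xb l = 0 := (Finset.mem_filter.1 hl).2
        have hdl : d l = q l := by rw [hdk l, hl0, sub_zero]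
        have harg : xb l + t * d l = t * q l := by rw [hl0, hdl, zero_add]
        have hH0 : Hfun θ (xb l) = 0 := by rw [hl0, Hfun, intervalIntegral.integral_same]
        have htq : 0 < t * q l := mul_pos htpos (hqpos l)
        have hle := Hfun_le hall hθ0 hθmono htq
        rw [harg, hH0, sub_zero]
        by_cases hlk : l = k₀
        · subst hlk
          rw [if_pos rfl]
          have := hk₀b t htpos htδ0
          calc Hfun θ (t * q l) ≤ (t * q l) * Real.log (θ (t * q l)) := hle
            _ = t * (q l * Real.log (θ (t * q l))) := by ring
            _ ≤ t * (-(CC + 1)) := by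
                apply mul_le_mul_of_nonneg_left this htpos.le
            _ = -(CC + 1) * t := by ring
        · rw [if_neg hlk]
          have hlog0 : Real.log (θ (t * q l)) ≤ 0 := hδZ l hl0 t htpos (htδZ l)
          calc Hfun θ (t * q l) ≤ (t * q l) * Real.log (θ (t * q l)) := hle
            _ ≤ 0 := mul_nonpos_of_nonneg_of_nonpos htq.le hlog0
      calc (∑ l ∈ Finset.univ.filter (fun l => xb l = 0),
            (Hfun θ (xb l + t * d l) - Hfun θ (xb l)))
          ≤ ∑ l ∈ Finset.univ.filter (fun l => xb l = 0),
            (if l = k₀ then -(CC + 1) * t else 0) := Finset.sum_le_sum hterm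
        _ = -(CC + 1) * t := by
            rw [Finset.sum_eq_single_of_mem k₀
              (Finset.mem_filter.2 ⟨Finset.mem_univ _, hk₀0⟩)
              (fun b _ hb => if_neg hb)]
            exact if_pos rfl
    -- bound on nonzero part
    have hNsum : (∑ l ∈ Finset.univ.filter (fun l => ¬ xb l = 0),
        (Hfun θ (xb l + t * d l) - Hfun θ (xb l)))
        ≤ (∑ l ∈ Finset.univ.filter (fun l => ¬ xb l = 0), Ml l) * t := by
      rw [Finset.sum_mul]
      apply Finset.sum_le_sum
      intro l hl
      exact hMl l (Finset.mem_filter.1 hl).2 t htpos.le (htδl l)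
    -- the linear part
    have hlin : -(t * ∑ l, ystar l * d l) ≤ |∑ l, ystar l * d l| * t := by
      calc -(t * ∑ l, ystar l * d l) = t * (-(∑ l, ystar l * d l)) := by ring
        _ ≤ t * |∑ l, ystar l * d l| :=
            mul_le_mul_of_nonneg_left (neg_le_abs _) htpos.le
        _ = |∑ l, ystar l * d l| * t := by ring
    have : g (xb + t • d) - g xb ≤ -t := by
      rw [hΔeq, hsplit]
      have h1 := hZsum
      have h2 := hNsum
      have h3 := hlin
      rw [hCC] at *
      nlinarith [htpos]
    linarith
  -- xb is an equilibrium
  have hfxb : f xb = 0 := by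
    rw [hEchar xb hxbpos]
    intro i j
    set d : EuclideanSpace ℝ (Fin n) := WithLp.toLp 2 (fun k => B k i - B k j) with hd
    have hdD : d ∈ D := by rw [hD]; exact Submodule.subset_span ⟨i, j, rfl⟩
    have hdk : ∀ l, d l = B l i - B l j := fun l => rfl
    -- small ball inside S
    set ε : ℝ := Finset.univ.inf' (Finset.univ_nonempty_iff.2 ⟨⟨0, hn⟩⟩)
      (fun l => xb l / (|d l| + 1)) with hε
    have hεpos : 0 < ε := by
      rw [hε, Finset.lt_inf'_iff]
      intro l _
      exact div_pos (hxbpos l) (by positivity)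
    have hmem : ∀ s : ℝ, |s| < ε → xb + s • d ∈ S := by
      intro s hs
      rw [hS]
      constructor
      · intro l
        have hlq : (xb + s • d) l = xb l + s * d l := by
          rw [PiLp.add_apply, PiLp.smul_apply, smul_eq_mul]
        rw [hlq]
        have h1 : ε ≤ xb l / (|d l| + 1) :=
          Finset.inf'_le _ (Finset.mem_univ l)
        have h2 : |s * d l| ≤ |s| * (|d l| + 1) := by
          rw [abs_mul]
          have := abs_nonneg (d l)
          nlinarith [abs_nonneg s]
        have h3 : |s| * (|d l| + 1) < xb l := by
          have h4 : |s| < xb l / (|d l| + 1) := lt_of_lt_of_le hs h1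
          rw [lt_div_iff₀ (by positivity : (0:ℝ) < |d l| + 1)] at h4
          linarith
        have h5 := neg_abs_le (s * d l)
        linarith [le_trans (neg_le_neg h2) h5]
      · have heq : (xb + s • d) - p = (xb - p) + s • d := by abel
        rw [heq]
        exact Submodule.add_mem D hDmemxb (Submodule.smul_mem D s hdD)
    -- local minimum of φ
    set φ : ℝ → ℝ := fun s => g (xb + s • d) with hφ
    have hloc : IsLocalMin φ 0 := by
      rw [IsLocalMin, IsMinFilter]
      rw [Metric.eventually_nhds_iff]
      refine ⟨ε, hεpos, fun s hsd => ?_⟩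
      have h1 : |s| < ε := by rwa [Real.dist_eq, sub_zero] at hsd
      have h0 : φ 0 = g xb := by
        simp only [hφ]
        norm_num
      calc φ 0 = g xb := h0
        _ ≤ g (xb + s • d) := hmin _ (hmem s h1)
        _ = φ s := by simp only [hφ]
    -- derivative of φ at 0
    have hderiv : HasDerivAt φ (∑ l, (Real.log (θ (xb l)) - ystar l) * d l) 0 := by
      have hφeq : φ = fun s => ∑ l, (Hfun θ (xb l + s * d l) - ystar l * (xb l + s * d l)) := by
        funext s
        rw [hφ, hg]
        exact Finset.sum_congr rfl fun l _ => by
          rw [PiLp.add_apply, PiLp.smul_apply, smul_eq_mul]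
      rw [hφeq]
      have h1 : ∀ l ∈ Finset.univ, HasDerivAt
          (fun s : ℝ => Hfun θ (xb l + s * d l) - ystar l * (xb l + s * d l))
          ((Real.log (θ (xb l)) - ystar l) * d l) 0 := by
        intro l _
        have hinner : HasDerivAt (fun s : ℝ => xb l + s * d l) (d l) 0 := by
          simpa using ((hasDerivAt_id (0:ℝ)).mul_const (d l)).const_add (xb l)
        have houter : HasDerivAt (Hfun θ) (Real.log (θ (xb l))) (xb l + 0 * d l) := by
          have : xb l + 0 * d l = xb l := by ring
          rw [this]
          exact Hfun_hasDerivAt hall hθcont hθ0 hθmono (hxbpos l)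
        have hcomp := HasDerivAt.comp (0:ℝ) houter hinner
        have hlinear : HasDerivAt (fun s : ℝ => ystar l * (xb l + s * d l))
            (ystar l * d l) 0 := hinner.const_mul (ystar l)
        have := hcomp.sub hlinear
        exact this.congr_deriv (by ring)
      exact HasDerivAt.fun_sum h1
    have hzero := hloc.hasDerivAt_eq_zero hderiv
    rw [← hzero]
    exact Finset.sum_congr rfl fun k _ => by rw [hdk k]; ring
  -- uniqueness
  refine ⟨xb, ⟨hxbS, hxbpos, hfxb⟩, ?_⟩
  rintro z ⟨hzS, hzpos, hfz⟩
  -- both satisfy the orthogonality relations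
  have hPz := (hEchar z hzpos).1 hfz
  have hPxb := (hEchar xb hxbpos).1 hfxb
  set vz : EuclideanSpace ℝ (Fin n) := WithLp.toLp 2 fun k => Real.log (θ (z k)) - ystar k with hvz
  set vxb : EuclideanSpace ℝ (Fin n) := WithLp.toLp 2 fun k => Real.log (θ (xb k)) - ystar k with hvxb
  have hvzD : vz ∈ Dᗮ := (horth vz).2 hPz
  have hvxbD : vxb ∈ Dᗮ := (horth vxb).2 hPxb
  have hzxD : z - xb ∈ D := by
    rw [hS] at hzS
    have h1 : z - p ∈ D := hzS.2
    have h2 : z - xb = (z - p) - (xb - p) := by abel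
    rw [h2]
    exact Submodule.sub_mem D h1 hDmemxb
  have hinner : (inner ℝ (z - xb) (vz - vxb) : ℝ) = 0 :=
    Submodule.inner_right_of_mem_orthogonal hzxD (Submodule.sub_mem _ hvzD hvxbD)
  have hsum : ∑ k, (z k - xb k) * (Real.log (θ (z k)) - Real.log (θ (xb k))) = 0 := by
    rw [PiLp.inner_apply] at hinner
    rw [← hinner]
    apply Finset.sum_congr rfl
    intro k _
    simp only [PiLp.sub_apply, RCLike.inner_apply, conj_trivial, hvz, hvxb, PiLp.toLp_apply]
    ring
  have hterm_nonneg : ∀ k, 0 ≤ (z k - xb k) * (Real.log (θ (z k)) - Real.log (θ (xb k))) := by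
    intro k
    rcases lt_trichotomy (z k) (xb k) with h | h | h
    · have := log_theta_mono hθ0 hθmono (hzpos k) (hxbpos k) h
      nlinarith
    · rw [h]; simp
    · have := log_theta_mono hθ0 hθmono (hxbpos k) (hzpos k) h
      nlinarith
  have hallzero := (Finset.sum_eq_zero_iff_of_nonneg
    (fun k _ => hterm_nonneg k)).1 hsum
  ext k
  have h1 := hallzero k (Finset.mem_univ k)
  by_contra hne
  rcases lt_or_gt_of_ne (fun h : z k = xb k => hne h) with h | h
  · have h2 := log_theta_mono hθ0 hθmono (hzpos k) (hxbpos k) h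
    nlinarith
  · have h2 := log_theta_mono hθ0 hθmono (hxbpos k) (hzpos k) h
    nlinarith
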